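/- arXiv:1609.09206 — 4 statements merged into one kernel-verified Lean document; each statement's English description precedes it below -/
import Mathlib

section
/- Let A be the 2m×2m block upper bidiagonal matrix with m diagonal blocks Q = [[cos θ, sin θ], [−sin θ, cos θ]] and identity blocks I₂ on the superdiagonal. Then for every n ≥ 0 and every j with 1 ≤ j ≤ m, the first-row entries of Aⁿ satisfy Aⁿ(1, 2j−1) = C(n, j−1)·cos((n − j + 1)θ) and Aⁿ(1, 2j) = C(n, j−1)·sin((n − j + 1)θ), where C(n,k) denotes the binomial coefficient (taken to be 0 when k > n). -/
/-- The `2m × 2m` real Jordan form with `m` identical rotation blocks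
`Q = [[cos θ, sin θ], [−sin θ, cos θ]]` on the diagonal and `I₂` blocks on
the superdiagonal (0-indexed). -/
noncomputable def jordanOsc (m : ℕ) (θ : ℝ) : Matrix (Fin (2 * m)) (Fin (2 * m)) ℝ :=
  Matrix.of fun i j =>
    if (i : ℕ) / 2 = (j : ℕ) / 2 then
      (if (i : ℕ) % 2 = (j : ℕ) % 2 then Real.cos θ
       else if (i : ℕ) % 2 = 0 then Real.sin θ else -Real.sin θ)
    else if (j : ℕ) / 2 = (i : ℕ) / 2 + 1 ∧ (i : ℕ) % 2 = (j : ℕ) % 2 then 1 else 0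

lemma col_even (m : ℕ) (θ : ℝ) (j : ℕ) (hj1 : 1 ≤ j) (hj2 : j ≤ m) (k : Fin (2*m)) :
    jordanOsc m θ k ⟨2*j-2, (by omega : 2*j-2+0 < 2*m)⟩ =
      (if (k:ℕ) = 2*j-2 then Real.cos θ else 0) +
      (if (k:ℕ) = 2*j-1 then -Real.sin θ else 0) +
      (if (k:ℕ) + 2 = 2*j-2 then 1 else 0) := by
  obtain ⟨k, hk⟩ := k
  simp only [jordanOsc, Matrix.of_apply]
  split_ifs <;> first | omega | norm_num

lemma col_odd (m : ℕ) (θ : ℝ) (j : ℕ) (hj1 : 1 ≤ j) (hj2 : j ≤ m) (k : Fin (2*m)) :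
    jordanOsc m θ k ⟨2*j-1, (by omega : 2*j-1+0 < 2*m)⟩ =
      (if (k:ℕ) = 2*j-2 then Real.sin θ else 0) +
      (if (k:ℕ) = 2*j-1 then Real.cos θ else 0) +
      (if (k:ℕ) + 2 = 2*j-1 then 1 else 0) := by
  obtain ⟨k, hk⟩ := k
  simp only [jordanOsc, Matrix.of_apply]
  split_ifs <;> first | omega | norm_num

lemma sum_ite_val {N : ℕ} (a : ℕ) (ha : a < N) (g : Fin N → ℝ) :
    ∑ k : Fin N, (if (k:ℕ) = a then g k else 0) = g ⟨a, ha⟩ := by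
  rw [show (fun k : Fin N => if (k:ℕ) = a then g k else 0)
      = fun k => if k = ⟨a,ha⟩ then g k else 0 from funext fun k => by
        simp [Fin.ext_iff]]
  simp [Finset.sum_ite_eq']

lemma sum_ite_val2 {N : ℕ} (a b : ℕ) (hab : ∀ x : ℕ, x + 2 = b ↔ x = a) (ha : a < N)
    (g : Fin N → ℝ) :
    ∑ k : Fin N, (if (k:ℕ) + 2 = b then g k else 0) = g ⟨a, ha⟩ := by
  trans (∑ k : Fin N, if (k:ℕ) = a then g k else 0)
  · exact Finset.sum_congr rfl fun k _ => if_congr (hab _) rfl rfl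
  · exact sum_ite_val a ha g

lemma sum_ite_zero {N : ℕ} (b : ℕ) (hb : ∀ x : ℕ, ¬ (x + 2 = b)) (g : Fin N → ℝ) :
    ∑ k : Fin N, (if (k:ℕ) + 2 = b then g k else 0) = 0 :=
  Finset.sum_eq_zero fun k _ => if_neg (hb _)

lemma key (m : ℕ) (hm : 1 ≤ m) (θ : ℝ) : ∀ (n j : ℕ) (_hj1 : 1 ≤ j) (_hj2 : j ≤ m),
    (jordanOsc m θ ^ n) ⟨0, (by omega : 0+0 < 2*m)⟩ ⟨2*j-2, (by omega : 2*j-2+0 < 2*m)⟩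
        = (n.choose (j-1) : ℝ) * Real.cos (((n:ℝ) - j + 1) * θ) ∧
    (jordanOsc m θ ^ n) ⟨0, (by omega : 0+0 < 2*m)⟩ ⟨2*j-1, (by omega : 2*j-1+0 < 2*m)⟩
        = (n.choose (j-1) : ℝ) * Real.sin (((n:ℝ) - j + 1) * θ) := by
  intro n
  induction n with
  | zero =>
    intro j hj1 hj2
    rw [pow_zero]
    rcases eq_or_lt_of_le hj1 with h | h
    · subst h
      simp [Matrix.one_apply, Fin.ext_iff]
    · have h1 : (0:ℕ).choose (j-1) = 0 := Nat.choose_eq_zero_of_lt (by omega)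
      rw [h1]
      constructor <;>
      · rw [Matrix.one_apply_ne (by simp [Fin.ext_iff]; omega)]
        norm_num
  | succ n ih =>
    intro j hj1 hj2
    rw [pow_succ, Matrix.mul_apply, Matrix.mul_apply]
    simp only [col_even m θ j hj1 hj2, col_odd m θ j hj1 hj2, mul_add, mul_ite, mul_zero,
      mul_one, Finset.sum_add_distrib]
    rw [sum_ite_val (2*j-2) (by omega), sum_ite_val (2*j-1) (by omega),
      sum_ite_val (2*j-2) (by omega), sum_ite_val (2*j-1) (by omega)]
    obtain ⟨hc, hs⟩ := ih j hj1 hj2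
    rw [hc, hs]
    have e2 : (((n:ℕ)+1 : ℕ):ℝ) - (j:ℝ) + 1 = ((n:ℝ) - j + 1) + 1 := by push_cast; ring
    rw [e2]
    rcases eq_or_lt_of_le hj1 with h | h
    · -- j = 1
      subst h
      rw [sum_ite_zero _ (by omega), sum_ite_zero _ (by omega)]
      simp only [Nat.sub_self, Nat.choose_zero_right, Nat.cast_one, one_mul, add_zero]
      rw [show ((n:ℝ) - 1 + 1 + 1) * θ = ((n:ℝ) - 1 + 1) * θ + θ by ring,
        Real.cos_add, Real.sin_add]
      constructor <;> ring
    · -- j ≥ 2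
      rw [sum_ite_val2 (2*j-4) (2*j-2) (by omega) (by omega),
        sum_ite_val2 (2*j-3) (2*j-1) (by omega) (by omega)]
      obtain ⟨hc', hs'⟩ := ih (j-1) (by omega) (by omega)
      have ei1 : (⟨2*j-4, by omega⟩ : Fin (2*m)) = ⟨2*(j-1)-2, by omega⟩ := by
        simp only [Fin.mk.injEq]; omega
      have ei2 : (⟨2*j-3, by omega⟩ : Fin (2*m)) = ⟨2*(j-1)-1, by omega⟩ := by
        simp only [Fin.mk.injEq]; omega
      rw [ei1, ei2, hc', hs']
      have ej : ((n:ℝ) - ((j:ℕ)-1 : ℕ) + 1) * θ = ((n:ℝ) - j + 1) * θ + θ := by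
        rw [Nat.cast_sub hj1]; push_cast; ring
      rw [ej]
      have ejj : (j - 1 - 1 : ℕ) = j - 2 := by omega
      rw [ejj]
      have h2 : j - 1 = (j-2) + 1 := by omega
      have hpasn : ((n:ℕ)+1).choose (j-1) = n.choose (j-2) + n.choose (j-1) := by
        rw [h2, Nat.choose_succ_succ, Nat.succ_eq_add_one, ← h2]
      have hpas : (((n:ℕ)+1).choose (j-1) : ℝ) = n.choose (j-2) + n.choose (j-1) := by
        rw [hpasn]; push_cast; ring
      rw [hpas, show ((n:ℝ) - j + 1 + 1) * θ = ((n:ℝ) - j + 1) * θ + θ by ring,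
        Real.cos_add, Real.sin_add]
      constructor <;> ring

theorem jordanOsc_pow_first_row (m : ℕ) (hm : 1 ≤ m) (θ : ℝ) (n : ℕ)
    (j : ℕ) (hj1 : 1 ≤ j) (hj2 : j ≤ m) :
    (jordanOsc m θ ^ n) ⟨0, by omega⟩ ⟨2 * j - 2, by omega⟩ =
      (n.choose (j - 1) : ℝ) * Real.cos (((n : ℝ) - j + 1) * θ) ∧
    (jordanOsc m θ ^ n) ⟨0, by omega⟩ ⟨2 * j - 1, by omega⟩ =
      (n.choose (j - 1) : ℝ) * Real.sin (((n : ℝ) - j + 1) * θ) := by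
  exact key m hm θ n j hj1 hj2
end

section
/- For all natural numbers m, w, h with w ≤ m and h ≤ m − 1, one has ∑_{k=0}^{w} (−1)^{m+k−1} · C(m, k) · C(m−k, w−k) · C(w+k, h − (m − w)) = 0, where C(a,b) = 0 whenever b < 0 or b > a. -/
open Finset

lemma aux1 (w i : ℕ) (hi : i < w) :
    ∑ k ∈ Finset.range (w + 1), (-1 : ℤ) ^ k * w.choose k * k.choose i = 0 := by
  rw [Finset.range_eq_Ico, ← Finset.sum_Ico_consecutive _ (Nat.zero_le i) (by omega : i ≤ w + 1)]
  have h1 : ∑ k ∈ Finset.Ico 0 i, (-1 : ℤ) ^ k * w.choose k * k.choose i = 0 := by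
    apply Finset.sum_eq_zero
    intro k hk
    simp only [Finset.mem_Ico] at hk
    rw [Nat.choose_eq_zero_of_lt hk.2]
    simp
  rw [h1, zero_add, Finset.sum_Ico_eq_sum_range]
  have h2 : ∀ t ∈ Finset.range (w + 1 - i),
      (-1 : ℤ) ^ (i + t) * w.choose (i + t) * (i + t).choose i =
      ((-1 : ℤ) ^ i * w.choose i) * ((-1 : ℤ) ^ t * (w - i).choose t) := by
    intro t ht
    simp only [Finset.mem_range] at ht
    have hit : i + t ≤ w := by omega
    have h3 : w.choose (i + t) * (i + t).choose i = w.choose i * (w - i).choose t := by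
      simpa using Nat.choose_mul (n := w) (Nat.le_add_right i t)
    have h3' : (w.choose (i + t) : ℤ) * (i + t).choose i
        = (w.choose i : ℤ) * (w - i).choose t := by exact_mod_cast h3
    rw [pow_add]
    linear_combination ((-1 : ℤ) ^ i * (-1) ^ t) * h3'
  rw [Finset.sum_congr rfl h2, ← Finset.mul_sum]
  have hwi : w + 1 - i = (w - i) + 1 := by omega
  rw [hwi, Int.alternating_sum_range_choose_of_ne (by omega : w - i ≠ 0)]
  ring

theorem vanishing_binomial_sum (m w h : ℕ) (hw : w ≤ m) (hh : h + 1 ≤ m) :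
    (∑ k ∈ Finset.range (w + 1),
        (-1 : ℤ) ^ (m + k - 1) * m.choose k * (m - k).choose (w - k) *
          (if m - w ≤ h then ((w + k).choose (h - (m - w)) : ℤ) else 0)) = 0 := by
  by_cases hc : m - w ≤ h
  · simp only [if_pos hc]
    set j := h - (m - w) with hj
    have hjw : j < w := by omega
    have key : ∀ k ∈ Finset.range (w + 1),
        (-1 : ℤ) ^ (m + k - 1) * m.choose k * (m - k).choose (w - k) * (w + k).choose j =
        ((-1 : ℤ) ^ (m - 1) * m.choose w) *
          ∑ i ∈ Finset.range (j + 1),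
            (w.choose i : ℤ) * ((-1 : ℤ) ^ k * w.choose k * k.choose (j - i)) := by
      intro k hk
      simp only [Finset.mem_range] at hk
      have hkw : k ≤ w := by omega
      have h1 : m.choose k * (m - k).choose (w - k) = m.choose w * w.choose k := by
        rw [Nat.choose_mul (n := m) hkw]
      have h1' : (m.choose k : ℤ) * (m - k).choose (w - k)
          = (m.choose w : ℤ) * w.choose k := by exact_mod_cast h1
      have hvand : ((w + k).choose j : ℤ) = ∑ i ∈ Finset.range (j + 1),
          (w.choose i : ℤ) * k.choose (j - i) := by
        rw [Nat.add_choose_eq, Finset.Nat.sum_antidiagonal_eq_sum_range_succ_mk]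
        push_cast
        rfl
      have hsign : (-1 : ℤ) ^ (m + k - 1) = (-1 : ℤ) ^ (m - 1) * (-1 : ℤ) ^ k := by
        rw [← pow_add]; congr 1; omega
      rw [hsign, hvand, Finset.mul_sum, Finset.mul_sum]
      apply Finset.sum_congr rfl
      intro i _
      linear_combination ((-1 : ℤ) ^ (m - 1) * (-1) ^ k * (w.choose i : ℤ)
        * (k.choose (j - i) : ℤ)) * h1'
    rw [Finset.sum_congr rfl key, ← Finset.mul_sum, Finset.sum_comm]
    have inner : ∀ i ∈ Finset.range (j + 1),
        ∑ k ∈ Finset.range (w + 1),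
          (w.choose i : ℤ) * ((-1 : ℤ) ^ k * w.choose k * k.choose (j - i)) = 0 := by
      intro i hi
      rw [← Finset.mul_sum, aux1 w (j - i) (by omega), mul_zero]
    rw [Finset.sum_congr rfl inner]
    simp
  · simp only [if_neg hc]
    simp
end

section
/- Fix integers m ≥ 1 and define, for 0 ≤ k ≤ 2m−1, l_k(θ) = (−1)^{k−1} · ∑_{h=0}^{⌊k/2⌋} C(m, k−2h) · C(m−(k−2h), h) · (2 cos θ)^{k−2h}, and set l_{2m}(θ) = −1. Then for every h with 0 ≤ h ≤ m−1 and every real θ, ∑_{k=0}^{2m} l_k(θ) · C(k, h) · e^{i(k−h)θ} = 0. -/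
open Complex Polynomial

lemma vanish (m h : ℕ) (hhm : h < m) (a b : ℂ) :
    ∑ k ∈ Finset.range (2*m+1),
      (((X - C a) * (X - C b))^m : ℂ[X]).coeff k * (k.choose h : ℂ) * a^k = 0 := by
  set Q : ℂ[X] := ((X - C a) * (X - C b))^m with hQ
  have hdeg : Q.natDegree ≤ 2*m := by
    calc Q.natDegree ≤ m * ((X - C a) * (X - C b)).natDegree := natDegree_pow_le
    _ ≤ m * 2 := by
        refine Nat.mul_le_mul_left _ ?_
        refine (natDegree_mul_le).trans ?_
        simp [natDegree_X_sub_C]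
    _ = 2*m := by ring
  have htay : taylor a Q = (X * (X + C (a - b)))^m := by
    rw [taylor_apply, hQ]
    simp only [pow_comp, mul_comp, sub_comp, X_comp, C_comp, C_sub]
    ring
  have hcoeff0 : (taylor a Q).coeff h = 0 := by
    rw [htay, mul_pow, mul_comm, coeff_mul_X_pow']
    simp [Nat.not_le.mpr hhm]
  have heval : (hasseDeriv h Q).eval a = 0 := by
    rw [← taylor_coeff]; exact hcoeff0
  have heval' : (hasseDeriv h Q).eval a
      = ∑ n ∈ Finset.range (2*m+1), ((n+h).choose h : ℂ) * Q.coeff (n+h) * a^n := by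
    rw [eval_eq_sum_range' (lt_of_le_of_lt ((natDegree_hasseDeriv_le Q h).trans
      (Nat.sub_le _ _) |>.trans hdeg) (Nat.lt_succ_self _))]
    exact Finset.sum_congr rfl fun n _ => by rw [hasseDeriv_coeff]
  -- now rewrite goal sum
  have key : ∑ k ∈ Finset.range (2*m+1), Q.coeff k * (k.choose h : ℂ) * a^k
      = a^h * ∑ n ∈ Finset.range (2*m+1), ((n+h).choose h : ℂ) * Q.coeff (n+h) * a^n := by
    rw [Finset.mul_sum]
    have e1 : ∑ k ∈ Finset.range (2*m+1), Q.coeff k * (k.choose h : ℂ) * a^k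
        = ∑ k ∈ Finset.range (2*m+1+h), Q.coeff k * (k.choose h : ℂ) * a^k := by
      refine Finset.sum_subset (Finset.range_subset_range.mpr (by omega)) ?_
      intro k hk hk'
      simp only [Finset.mem_range, not_lt] at hk'
      rw [coeff_eq_zero_of_natDegree_lt (by omega)]
      ring
    have e2 : ∑ k ∈ Finset.range (2*m+1+h), Q.coeff k * (k.choose h : ℂ) * a^k
        = ∑ k ∈ Finset.Ico h (2*m+1+h), Q.coeff k * (k.choose h : ℂ) * a^k := by
      rw [Finset.range_eq_Ico]
      refine (Finset.sum_subset (Finset.Ico_subset_Ico (Nat.zero_le _) le_rfl) ?_).symm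
      intro k hk hk'
      simp only [Finset.mem_Ico, not_and, not_le] at hk hk'
      have hkh : k < h := by omega
      rw [Nat.choose_eq_zero_of_lt hkh]
      push_cast; ring
    rw [e1, e2, Finset.sum_Ico_eq_sum_range]
    simp only [Nat.add_sub_cancel]
    refine Finset.sum_congr rfl fun n _ => ?_
    rw [pow_add]
    push_cast
    ring
  rw [key, ← heval', heval, mul_zero]


lemma key_coeff (m k : ℕ) (hk : k ≤ 2*m) (c : ℂ) :
    ((X^2 + 1 + C c * X)^m : ℂ[X]).coeff k
      = ∑ h ∈ Finset.range (k/2+1),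
          (m.choose (k-2*h) * (m-(k-2*h)).choose h : ℂ) * c^(k-2*h) := by
  have e1 : ((X^2 + 1 + C c * X)^m : ℂ[X])
      = ∑ j ∈ Finset.range (m+1), ∑ i ∈ Finset.range (m+1),
          C ((m.choose j * (m-j).choose i : ℂ) * c^j) * X^(2*i+j) := by
    have : ((X^2 + 1 + C c * X)^m : ℂ[X]) = (C c * X + (X^2+1))^m := by ring
    rw [this, add_pow]
    refine Finset.sum_congr rfl fun j hj => ?_
    have e2 : ((X^2 + 1 : ℂ[X]))^(m-j)
        = ∑ i ∈ Finset.range (m+1), C (((m-j).choose i : ℂ)) * X^(2*i) := by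
      rw [add_pow]
      rw [Finset.sum_subset (Finset.range_subset_range.mpr (by omega : m-j+1 ≤ m+1))]
      · refine Finset.sum_congr rfl fun i hi => ?_
        rw [one_pow, mul_one, ← pow_mul, C_eq_natCast]
        ring
      · intro i hi hi'
        simp only [Finset.mem_range, not_lt] at hi'
        rw [Nat.choose_eq_zero_of_lt (by omega)]
        simp
    rw [e2, Finset.mul_sum, Finset.sum_mul]
    refine Finset.sum_congr rfl fun i hi => ?_
    rw [mul_pow, ← C_pow, ← C_eq_natCast, C_mul, C_mul]
    ring
  rw [e1, finset_sum_coeff]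
  have inner : ∀ i ∈ Finset.range (m+1),
      (∑ j ∈ Finset.range (m+1), (C ((m.choose j * (m-j).choose i : ℂ) * c^j) * X^(2*i+j)).coeff k)
      = if i ≤ k/2 then (m.choose (k-2*i) * (m-(k-2*i)).choose i : ℂ) * c^(k-2*i) else 0 := by
    intro i hi
    simp only [coeff_C_mul, coeff_X_pow, mul_ite, mul_one, mul_zero]
    by_cases h2i : 2*i ≤ k
    · rw [if_pos (by omega : i ≤ k/2)]
      have : ∀ j, (if k = 2*i+j then (m.choose j * (m-j).choose i : ℂ) * c^j else 0)
          = if j = k-2*i then (m.choose j * (m-j).choose i : ℂ) * c^j else 0 := by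
        intro j
        exact if_congr (by omega) rfl rfl
      refine Eq.trans (Finset.sum_congr rfl fun j hj => this j) ?_
      rw [Finset.sum_ite_eq' (Finset.range (m+1)) (k-2*i)]
      by_cases hkm : k - 2*i ≤ m
      · rw [if_pos (Finset.mem_range.mpr (by omega))]
      · rw [if_neg (by simp only [Finset.mem_range]; omega)]
        rw [Nat.choose_eq_zero_of_lt (by omega : m < k - 2*i)]
        simp
    · rw [if_neg (by omega : ¬ i ≤ k/2)]
      refine Finset.sum_eq_zero fun j hj => ?_
      rw [if_neg (by omega)]
  have hsub : Finset.range (k/2+1) ⊆ Finset.range (m+1) :=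
    Finset.range_subset_range.mpr (by omega)
  simp only [finset_sum_coeff]
  rw [Finset.sum_comm, Finset.sum_congr rfl inner]
  rw [← Finset.sum_subset hsub (fun i _ hi' => if_neg (by
    simp only [Finset.mem_range, not_lt] at hi'; omega))]
  refine Finset.sum_congr rfl fun i hi => ?_
  rw [if_pos (by simp only [Finset.mem_range] at hi; omega)]

/-- The coefficients `l_k(θ)`, for `0 ≤ k ≤ 2m − 1`:
`l_k(θ) = (−1)^{k−1} ∑_{h=0}^{⌊k/2⌋} C(m, k−2h) C(m−(k−2h), h) (2cos θ)^{k−2h}`.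
(Note `(−1)^{k−1} = (−1)^{k+1}`.) -/
noncomputable def lCoeff (m : ℕ) (θ : ℝ) (k : ℕ) : ℝ :=
  (-1 : ℝ) ^ (k + 1) *
    ∑ h ∈ Finset.range (k / 2 + 1),
      (m.choose (k - 2 * h) * (m - (k - 2 * h)).choose h : ℝ) *
        (2 * Real.cos θ) ^ (k - 2 * h)

theorem lCoeff_annihilates (m : ℕ) (hm : 1 ≤ m) (θ : ℝ) (h : ℕ) (hh : h + 1 ≤ m) :
    (∑ k ∈ Finset.range (2 * m + 1),
        (if k = 2 * m then (-1 : ℂ) else (lCoeff m θ k : ℂ)) * (k.choose h : ℂ) *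
          Complex.exp (I * (((k : ℝ) - h) * θ))) = 0 := by
  set a : ℂ := Complex.exp (θ * I) with ha
  set b : ℂ := Complex.exp (-θ * I) with hb
  set c : ℂ := -(2 * (Real.cos θ : ℂ)) with hc
  have hfac : ((X^2 + 1 + Polynomial.C c * X : ℂ[X]))
      = (X - Polynomial.C a) * (X - Polynomial.C b) := by
    have hab : a * b = 1 := by rw [ha, hb, ← Complex.exp_add]; simp
    have hsum : a + b = 2 * (Real.cos θ : ℂ) := by
      rw [ha, hb, Complex.ofReal_cos, Complex.cos]
      push_cast
      ring
    have e : (X - Polynomial.C a) * (X - Polynomial.C b)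
        = X^2 - Polynomial.C (a+b) * X + Polynomial.C (a*b) := by
      rw [C_add, C_mul]; ring
    rw [e, hab, hsum, hc, map_one, map_neg, C_mul]
    push_cast
    ring
  set P : ℂ[X] := ((X - Polynomial.C a) * (X - Polynomial.C b))^m with hP
  have hmon : P.Monic := ((monic_X_sub_C a).mul (monic_X_sub_C b)).pow m
  have hdeg : P.natDegree = 2*m := by
    rw [hP, natDegree_pow, natDegree_mul (X_sub_C_ne_zero a) (X_sub_C_ne_zero b),
      natDegree_X_sub_C, natDegree_X_sub_C]
    ring
  have hlead : P.coeff (2*m) = 1 := by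
    have := hmon.coeff_natDegree
    rwa [hdeg] at this
  have hneg1 : ∀ k h' : ℕ, 2*h' ≤ k → (-1:ℂ)^(k-2*h') = (-1)^k := by
    intro k h' hkh
    have h2 : k - 2*h' + 2*h' = k := by omega
    calc (-1:ℂ)^(k-2*h') = (-1)^(k-2*h') * ((-1:ℂ)^2)^h' := by norm_num
    _ = (-1)^(k-2*h'+2*h') := by rw [← pow_mul, ← pow_add]
    _ = (-1)^k := by rw [h2]
  have hculprit : ∀ k ∈ Finset.range (2*m+1),
      (if k = 2*m then (-1:ℂ) else ((lCoeff m θ k : ℝ) : ℂ)) = -(P.coeff k) := by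
    intro k hk
    rw [Finset.mem_range] at hk
    by_cases hk2 : k = 2*m
    · rw [if_pos hk2, hk2, hlead]
    · rw [if_neg hk2]
      rw [hP, ← hfac, key_coeff m k (by omega) c]
      simp only [lCoeff]
      push_cast
      rw [Finset.mul_sum, ← Finset.sum_neg_distrib]
      refine Finset.sum_congr rfl fun h' hh' => ?_
      rw [Finset.mem_range] at hh'
      have h2h : 2*h' ≤ k := by omega
      rw [hc]
      have : (-(2 * (Real.cos θ : ℂ)))^(k-2*h')
          = (-1:ℂ)^k * (2 * (Real.cos θ : ℂ))^(k-2*h') := by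
        rw [neg_pow, hneg1 k h' h2h]
      rw [this, Complex.ofReal_cos]
      ring
  have hexp : ∀ k : ℕ, Complex.exp (I * ((((k:ℝ):ℂ) - (h:ℂ)) * (θ:ℂ)))
      = a^k * Complex.exp (-((h:ℂ) * θ * I)) := by
    intro k
    rw [ha, ← Complex.exp_nat_mul, ← Complex.exp_add]
    congr 1
    push_cast
    ring
  calc (∑ k ∈ Finset.range (2 * m + 1),
        (if k = 2 * m then (-1 : ℂ) else (lCoeff m θ k : ℂ)) * (k.choose h : ℂ) *
          Complex.exp (I * (((k : ℝ) - h) * θ)))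
      = (-Complex.exp (-((h:ℂ) * θ * I))) *
          ∑ k ∈ Finset.range (2*m+1), P.coeff k * (k.choose h : ℂ) * a^k := by
        rw [Finset.mul_sum]
        refine Finset.sum_congr rfl fun k hk => ?_
        rw [hculprit k hk, hexp k]
        ring
    _ = 0 := by
        have hv := vanish m h (by omega) a b
        rw [← hP] at hv
        rw [hv, mul_zero]
end

section
/- Fix an integer m ≥ 1 and define, for 0 ≤ k ≤ 2m−1, l_k(θ) = (−1)^{k−1} · ∑_{h=0}^{⌊k/2⌋} C(m, k−2h) · C(m−(k−2h), h) · (2 cos θ)^{k−2h}. Then ∑_{k=0}^{2m−1} |l_k(θ)| = (2(1 + |cos θ|))^m − 1 for every real θ. -/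
-- Step 1: absolute value of lCoeff
lemma abs_lCoeff (m : ℕ) (θ : ℝ) (k : ℕ) :
    |lCoeff m θ k| = ∑ h ∈ Finset.range (k / 2 + 1),
      (m.choose (k - 2 * h) * (m - (k - 2 * h)).choose h : ℝ) *
        (2 * |Real.cos θ|) ^ (k - 2 * h) := by
  set x := 2 * |Real.cos θ| with hxdef
  have hx : 0 ≤ x := by positivity
  have hterm : ∀ h ∈ Finset.range (k / 2 + 1),
      (0:ℝ) ≤ (m.choose (k - 2 * h) * (m - (k - 2 * h)).choose h : ℝ) * x ^ (k - 2 * h) := by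
    intro h _
    positivity
  have hS : (0:ℝ) ≤ ∑ h ∈ Finset.range (k / 2 + 1),
      (m.choose (k - 2 * h) * (m - (k - 2 * h)).choose h : ℝ) * x ^ (k - 2 * h) :=
    Finset.sum_nonneg hterm
  rcases le_or_gt 0 (Real.cos θ) with hc | hc
  · have hcos : |Real.cos θ| = Real.cos θ := abs_of_nonneg hc
    rw [lCoeff, abs_mul, abs_pow, abs_neg, abs_one, one_pow, one_mul, hxdef, hcos,
      abs_of_nonneg]
    apply Finset.sum_nonneg
    intro h _
    have : (0:ℝ) ≤ 2 * Real.cos θ := by linarith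
    positivity
  · have hcos : 2 * Real.cos θ = -x := by
      rw [hxdef, abs_of_neg hc]; ring
    have hsgn : ∀ h ∈ Finset.range (k / 2 + 1),
        ((2 : ℝ) * Real.cos θ) ^ (k - 2 * h) = (-1)^k * x ^ (k - 2 * h) := by
      intro h hh
      rw [Finset.mem_range] at hh
      have h2 : 2 * h ≤ k := by omega
      have : ((-1:ℝ))^(k - 2*h) = (-1)^k := by
        conv_rhs => rw [← Nat.sub_add_cancel h2]
        rw [pow_add, pow_mul, neg_one_sq, one_pow, mul_one]
      rw [hcos, neg_pow, ← this]
    rw [lCoeff]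
    rw [Finset.sum_congr rfl (fun h hh => by rw [hsgn h hh])]
    have : ∑ h ∈ Finset.range (k / 2 + 1),
        (m.choose (k - 2 * h) * (m - (k - 2 * h)).choose h : ℝ) *
          ((-1:ℝ)^k * x ^ (k - 2 * h)) =
        (-1:ℝ)^k * ∑ h ∈ Finset.range (k / 2 + 1),
          (m.choose (k - 2 * h) * (m - (k - 2 * h)).choose h : ℝ) * x ^ (k - 2 * h) := by
      rw [Finset.mul_sum]; apply Finset.sum_congr rfl; intro h _; ring
    rw [this, abs_mul, abs_mul, abs_pow, abs_pow, abs_neg, abs_one, one_pow, one_pow,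
      one_mul, one_mul, abs_of_nonneg hS]

theorem lCoeff_abs_sum (m : ℕ) (hm : 1 ≤ m) (θ : ℝ) :
    (∑ k ∈ Finset.range (2 * m), |lCoeff m θ k|) =
      (2 * (1 + |Real.cos θ|)) ^ m - 1 := by
  set x := 2 * |Real.cos θ| with hxdef
  have hx : 0 ≤ x := by positivity
  set G : ℕ × ℕ → ℝ := fun p => (m.choose p.1 * (m - p.1).choose p.2 : ℝ) * x ^ p.1 with hG
  -- step 1
  have h1 : (∑ k ∈ Finset.range (2 * m), |lCoeff m θ k|) =
      ∑ p ∈ (Finset.range (2*m)).sigma (fun k => Finset.range (k/2+1)),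
        G (p.1 - 2 * p.2, p.2) := by
    rw [Finset.sum_sigma]
    exact Finset.sum_congr rfl (fun k _ => abs_lCoeff m θ k)
  -- step 2: reindex
  have h2 : (∑ p ∈ (Finset.range (2*m)).sigma (fun k => Finset.range (k/2+1)),
        G (p.1 - 2 * p.2, p.2)) =
      ∑ p ∈ (Finset.range (2*m) ×ˢ Finset.range m).filter (fun p => p.1 + 2 * p.2 < 2*m),
        G p := by
    apply Finset.sum_nbij' (fun p => (p.1 - 2 * p.2, p.2))
      (fun p => ⟨p.1 + 2 * p.2, p.2⟩)
    · rintro ⟨k, h⟩ hp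
      simp only [Finset.mem_sigma, Finset.mem_range] at hp
      simp only [Finset.mem_filter, Finset.mem_product, Finset.mem_range]
      omega
    · rintro ⟨j, h⟩ hp
      simp only [Finset.mem_filter, Finset.mem_product, Finset.mem_range] at hp
      simp only [Finset.mem_sigma, Finset.mem_range]
      omega
    · rintro ⟨k, h⟩ hp
      simp only [Finset.mem_sigma, Finset.mem_range] at hp
      simp only [Sigma.mk.inj_iff]
      constructor
      · omega
      · rfl
    · rintro ⟨j, h⟩ hp
      simp
    · rintro ⟨k, h⟩ _
      rfl
  -- step 3: drop the filter (terms outside are zero)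
  have h3 : (∑ p ∈ (Finset.range (2*m) ×ˢ Finset.range m).filter
        (fun p => p.1 + 2 * p.2 < 2*m), G p) =
      ∑ p ∈ Finset.range (2*m) ×ˢ Finset.range m, G p := by
    apply Finset.sum_filter_of_ne
    rintro ⟨j, h⟩ hp hne
    simp only [Finset.mem_product, Finset.mem_range] at hp
    by_contra hlt
    push_neg at hlt
    apply hne
    have hj : j ≤ m := by
      by_contra hjm
      push_neg at hjm
      have : m.choose j = 0 := Nat.choose_eq_zero_of_lt hjm
      simp [hG, this] at hne
    have hh : h ≤ m - j := by
      by_contra hhm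
      push_neg at hhm
      have : (m - j).choose h = 0 := Nat.choose_eq_zero_of_lt hhm
      simp [hG, this] at hne
    omega
  -- step 4: compute product sum
  have h4 : (∑ p ∈ Finset.range (2*m) ×ˢ Finset.range m, G p) =
      ∑ j ∈ Finset.range (2*m), (m.choose j : ℝ) * x ^ j *
        (∑ h ∈ Finset.range m, ((m - j).choose h : ℝ)) := by
    rw [Finset.sum_product]
    apply Finset.sum_congr rfl
    intro j _
    rw [Finset.mul_sum]
    apply Finset.sum_congr rfl
    intro h _
    simp [hG]
    ring
  -- inner sums
  have hinner : ∀ j, 1 ≤ j → (∑ h ∈ Finset.range m, ((m - j).choose h : ℝ)) = 2 ^ (m - j) := by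
    intro j hj
    have hsub : Finset.range (m - j + 1) ⊆ Finset.range m := by
      intro a ha
      rw [Finset.mem_range] at *
      omega
    rw [← Finset.sum_subset hsub (fun a _ ha => by
      rw [Finset.mem_range] at ha
      push_neg at ha
      norm_cast
      exact Nat.choose_eq_zero_of_lt (by omega))]
    norm_cast
    exact Nat.sum_range_choose (m - j)
  have hinner0 : (∑ h ∈ Finset.range m, ((m - 0).choose h : ℝ)) = 2 ^ m - 1 := by
    have := Nat.sum_range_choose m
    have hsplit : ∑ h ∈ Finset.range (m+1), (m.choose h : ℝ) = 2 ^ m := by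
      norm_cast
    rw [Finset.sum_range_succ] at hsplit
    simp only [Nat.sub_zero]
    simp at hsplit
    linarith
  have h5 : (∑ j ∈ Finset.range (2*m), (m.choose j : ℝ) * x ^ j *
        (∑ h ∈ Finset.range m, ((m - j).choose h : ℝ))) =
      (∑ j ∈ Finset.range (2*m), (m.choose j : ℝ) * x ^ j * 2 ^ (m - j)) - 1 := by
    have key : ∀ j ∈ Finset.range (2*m),
        (m.choose j : ℝ) * x ^ j * (∑ h ∈ Finset.range m, ((m - j).choose h : ℝ)) =
        (m.choose j : ℝ) * x ^ j * 2 ^ (m - j) - (if j = 0 then 1 else 0) := by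
      intro j _
      rcases Nat.eq_zero_or_pos j with rfl | hj
      · simp only [if_pos rfl]
        rw [hinner0]
        simp
      · rw [if_neg (by omega), hinner j hj, sub_zero]
    rw [Finset.sum_congr rfl key, Finset.sum_sub_distrib]
    congr 1
    rw [Finset.sum_ite_eq' (Finset.range (2*m)) 0 (fun _ => (1:ℝ))]
    simp
    omega
  have h6 : (∑ j ∈ Finset.range (2*m), (m.choose j : ℝ) * x ^ j * 2 ^ (m - j)) =
      (x + 2) ^ m := by
    have hsub : Finset.range (m + 1) ⊆ Finset.range (2*m) := by
      intro a ha
      rw [Finset.mem_range] at *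
      omega
    rw [← Finset.sum_subset hsub (fun a _ ha => by
      rw [Finset.mem_range] at ha
      push_neg at ha
      have : m.choose a = 0 := Nat.choose_eq_zero_of_lt (by omega)
      simp [this])]
    rw [add_pow]
    apply Finset.sum_congr rfl
    intro j _
    ring
  rw [h1, h2, h3, h4, h5, h6]
  have : 2 * (1 + |Real.cos θ|) = x + 2 := by rw [hxdef]; ring
  rw [this]
end
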